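/- arXiv:2007.10959 — 7 statements merged into one kernel-verified Lean document; each statement's English description precedes it below -/
import Mathlib

section
/- If a, b are real numbers with a² + b² > 0, then the 4×4 matrix L₄ = [[3b, √3 a, 0, 0], [√3 a, b, 2a, 0], [0, 2a, −b, √3 a], [0, 0, √3 a, −3b]] has four distinct real eigenvalues, namely ±√(a² + b²) and ±3√(a² + b²). -/
open Matrix

/-- for real `a, b` with `a² + b² > 0`, the real symmetric matrix `L₄`
has four distinct real eigenvalues `±√(a²+b²)`, `±3√(a²+b²)`. -/
theorem stmt3 (a b : ℝ) (hab : a ^ 2 + b ^ 2 > 0)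
    (L₄ : Matrix (Fin 4) (Fin 4) ℝ)
    (hL : L₄ = !![3 * b, Real.sqrt 3 * a, 0, 0;
                  Real.sqrt 3 * a, b, 2 * a, 0;
                  0, 2 * a, -b, Real.sqrt 3 * a;
                  0, 0, Real.sqrt 3 * a, -(3 * b)]) :
    ∀ s : ℝ, s = Real.sqrt (a ^ 2 + b ^ 2) →
      ([s, -s, 3 * s, -(3 * s)] : List ℝ).Pairwise (· ≠ ·) ∧
      (∀ z : ℝ, Matrix.det (z • (1 : Matrix (Fin 4) (Fin 4) ℝ) - L₄) = 0 ↔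
        z = s ∨ z = -s ∨ z = 3 * s ∨ z = -(3 * s)) := by
  intro s hs
  have hs2 : s ^ 2 = a ^ 2 + b ^ 2 := by rw [hs]; exact Real.sq_sqrt hab.le
  have hspos : 0 < s := by rw [hs]; exact Real.sqrt_pos.mpr hab
  have ht : Real.sqrt 3 ^ 2 = 3 := Real.sq_sqrt (by norm_num)
  constructor
  · simp only [List.pairwise_cons, List.mem_cons, List.not_mem_nil, or_false,
      List.mem_singleton, List.Pairwise.nil, ne_eq]
    norm_num
    constructor
    · refine ⟨?_, ?_, ?_⟩ <;> intro h <;> nlinarith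
    constructor
    · refine ⟨?_, ?_⟩ <;> intro h <;> nlinarith
    · intro h; nlinarith
  · intro z
    have key : Matrix.det (z • (1 : Matrix (Fin 4) (Fin 4) ℝ) - L₄)
        = (z - s) * (z + s) * (z - 3 * s) * (z + 3 * s) := by
      subst hL
      simp [Matrix.det_succ_row_zero, Fin.sum_univ_succ, Fin.succAbove_zero, Fin.succ_succAbove_zero, Fin.succ_succAbove_succ, Fin.succ_succAbove_one, Fin.one_succAbove_zero, Fin.one_succAbove_one, Fin.one_succAbove_succ, Fin.zero_succAbove, Matrix.one_apply]; simp [show Fin.succAbove (1 : Fin 4) 2 = 3 from rfl]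
      linear_combination (-(a^2)*(z-3*b)*(z-b) - a^2*(z+b)*(z+3*b) + (Real.sqrt 3^2+3)*a^4) * ht + (10*z^2 - 9*(s^2+a^2+b^2)) * hs2
    rw [key]
    constructor
    · intro h
      rcases mul_eq_zero.mp h with h | h
      · rcases mul_eq_zero.mp h with h | h
        · rcases mul_eq_zero.mp h with h | h
          · exact Or.inl (by linarith)
          · exact Or.inr (Or.inl (by linarith))
        · exact Or.inr (Or.inr (Or.inl (by linarith)))
      · exact Or.inr (Or.inr (Or.inr (by linarith)))
    · rintro (h | h | h | h) <;> subst h <;> ring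
end

section
/- If a, b are real numbers with a² + b² > 0, then every eigenvalue of the matrix i·L₄ (where L₄ is the real symmetric matrix above) is purely imaginary and nonzero, and the four eigenvalues ±i√(a² + b²), ±3i√(a² + b²) are pairwise distinct. -/
open Matrix Complex

lemma sq_neg_re_zero (z : ℂ) (c : ℝ) (hc : 0 < c) (h : z ^ 2 = -(c : ℂ)) :
    z.re = 0 ∧ z ≠ 0 := by
  have him : (z ^ 2).im = 0 := by rw [h]; simp
  have hre : (z ^ 2).re = -c := by rw [h]; simp
  rw [show z ^ 2 = z * z by ring] at him hre
  simp [Complex.mul_im, Complex.mul_re] at him hre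
  have hri : z.re * z.im = 0 := by linarith
  constructor
  · rcases mul_eq_zero.mp hri with h1 | h2
    · exact h1
    · rw [h2] at hre; nlinarith [sq_nonneg z.re]
  · intro h0
    rw [h0] at hre; simp at hre; linarith

lemma det_L4 (a b : ℝ) (z : ℂ) :
    Matrix.det (Complex.I • ((!![3 * b, Real.sqrt 3 * a, 0, 0;
                  Real.sqrt 3 * a, b, 2 * a, 0;
                  0, 2 * a, -b, Real.sqrt 3 * a;
                  0, 0, Real.sqrt 3 * a, -(3 * b)] : Matrix (Fin 4) (Fin 4) ℝ).map (Complex.ofReal))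
          - z • (1 : Matrix (Fin 4) (Fin 4) ℂ)) =
    (z ^ 2 + ((a : ℂ) ^ 2 + (b : ℂ) ^ 2)) * (z ^ 2 + 9 * ((a : ℂ) ^ 2 + (b : ℂ) ^ 2)) := by
  have h3 : ((Real.sqrt 3 : ℝ) : ℂ) ^ 2 = 3 := by
    norm_cast
    rw [Real.sq_sqrt]; norm_num
  set s : ℂ := ((Real.sqrt 3 : ℝ) : ℂ) with hs
  have hM : Complex.I • ((!![3 * b, Real.sqrt 3 * a, 0, 0;
                  Real.sqrt 3 * a, b, 2 * a, 0;
                  0, 2 * a, -b, Real.sqrt 3 * a;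
                  0, 0, Real.sqrt 3 * a, -(3 * b)] : Matrix (Fin 4) (Fin 4) ℝ).map (Complex.ofReal))
          - z • (1 : Matrix (Fin 4) (Fin 4) ℂ) =
      !![Complex.I * (3*b) - z, Complex.I * (s*a), 0, 0;
         Complex.I * (s*a), Complex.I * b - z, Complex.I * (2*a), 0;
         0, Complex.I * (2*a), Complex.I * (-b) - z, Complex.I * (s*a);
         0, 0, Complex.I * (s*a), Complex.I * (-(3*b)) - z] := by
    ext i j
    fin_cases i <;> fin_cases j <;>
      simp [Matrix.map_apply, Matrix.one_apply, Matrix.vecHead, Matrix.vecTail, hs]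
  rw [hM]
  simp [Matrix.det_succ_row_zero, Fin.sum_univ_succ, Matrix.submatrix_apply,
    Fin.succAbove, Matrix.vecHead, Matrix.vecTail]
  linear_combination (-(a:ℂ)^2*(6*(b:ℂ)^2 - 2*z^2) + (a:ℂ)^4*(s^2+3)) * h3 +
    (-((b:ℂ)^2*z^2*10 + z^2*s^2*(a:ℂ)^2*2 + z^2*(a:ℂ)^2*4) +
      (Complex.I^2-1)*(-((b:ℂ)^2*s^2*(a:ℂ)^2*6) + (b:ℂ)^2*(a:ℂ)^2*36 + (b:ℂ)^4*9 + s^4*(a:ℂ)^4)) * Complex.I_sq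

/-- for real `a, b` with `a² + b² > 0`, every eigenvalue of `i·L₄`
is purely imaginary and nonzero, and the four eigenvalues
`±i√(a²+b²)`, `±3i√(a²+b²)` are pairwise distinct. -/
theorem stmt4 (a b : ℝ) (hab : a ^ 2 + b ^ 2 > 0)
    (L₄ : Matrix (Fin 4) (Fin 4) ℝ)
    (hL : L₄ = !![3 * b, Real.sqrt 3 * a, 0, 0;
                  Real.sqrt 3 * a, b, 2 * a, 0;
                  0, 2 * a, -b, Real.sqrt 3 * a;
                  0, 0, Real.sqrt 3 * a, -(3 * b)]) :
    (∀ z : ℂ,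
        Matrix.det (Complex.I • (L₄.map (Complex.ofReal))
          - z • (1 : Matrix (Fin 4) (Fin 4) ℂ)) = 0 → z.re = 0 ∧ z ≠ 0) ∧
    ∀ s : ℝ, s = Real.sqrt (a ^ 2 + b ^ 2) →
      ([Complex.I * s, -(Complex.I * s), 3 * Complex.I * s,
        -(3 * Complex.I * s)] : List ℂ).Pairwise (· ≠ ·) := by
  subst hL
  constructor
  · intro z hz
    rw [det_L4] at hz
    rcases mul_eq_zero.mp hz with h | h
    · exact sq_neg_re_zero z (a ^ 2 + b ^ 2) hab (by push_cast; linear_combination h)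
    · exact sq_neg_re_zero z (9 * (a ^ 2 + b ^ 2)) (by linarith)
        (by push_cast; linear_combination h)
  · intro s hs
    have hspos : 0 < s := by rw [hs]; exact Real.sqrt_pos.mpr hab
    have h1 : Complex.I * s ≠ -(Complex.I * s) := by
      intro h
      have := congrArg Complex.im h
      simp at this; linarith
    have h2 : Complex.I * s ≠ 3 * Complex.I * s := by
      intro h
      have := congrArg Complex.im h
      simp at this; linarith
    have h3 : Complex.I * s ≠ -(3 * Complex.I * s) := by
      intro h
      have := congrArg Complex.im h
      simp at this; linarith
    have h4 : -(Complex.I * s) ≠ 3 * Complex.I * s := by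
      intro h
      have := congrArg Complex.im h
      simp at this; linarith
    have h5 : -(Complex.I * s) ≠ -(3 * Complex.I * s) := by
      intro h
      have := congrArg Complex.im h
      simp at this; linarith
    have h6 : 3 * Complex.I * s ≠ -(3 * Complex.I * s) := by
      intro h
      have := congrArg Complex.im h
      simp at this; linarith
    simp [List.pairwise_cons, h1, h2, h3, h4, h5, h6]
end

section
/- For real a, the integral ∫_{−∞}^{∞} e^{iaz}/(2 cosh² z) dz equals πa/(2 sinh(πa/2)) when a ≠ 0, and equals 1 when a = 0. -/
open Complex MeasureTheory

namespace Stmt10Aux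

/-- The logistic map, our change of variables. -/
noncomputable def phi (x : ℝ) : ℝ := (1 + Real.exp (-(2 * x)))⁻¹

lemma one_add_exp_pos (x : ℝ) : 0 < 1 + Real.exp (-(2 * x)) := by positivity

lemma phi_mem (x : ℝ) : phi x ∈ Set.Ioo (0 : ℝ) 1 := by
  have h := one_add_exp_pos x
  have he := Real.exp_pos (-(2 * x))
  constructor
  · exact inv_pos.mpr h
  · rw [phi, inv_lt_one_iff₀]
    right
    linarith

lemma hasDerivAt_phi (x : ℝ) :
    HasDerivAt phi (2 * Real.exp (-(2 * x)) / (1 + Real.exp (-(2 * x))) ^ 2) x := by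
  have h1 : HasDerivAt (fun x : ℝ => -(2 * x)) (-2) x := by
    simpa using (hasDerivAt_id x).const_mul (-2 : ℝ)
  have h2 : HasDerivAt (fun x : ℝ => 1 + Real.exp (-(2 * x)))
      (Real.exp (-(2 * x)) * (-2)) x :=
    ((Real.hasDerivAt_exp _).comp x h1).const_add 1
  have h3 : HasDerivAt phi
      (-(Real.exp (-(2 * x)) * -2) / (1 + Real.exp (-(2 * x))) ^ 2) x :=
    h2.inv (ne_of_gt (one_add_exp_pos x))
  convert h3 using 1
  ring

lemma phi_inj : Function.Injective phi := by
  intro x y h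
  rw [phi, phi, inv_inj, add_right_inj, Real.exp_eq_exp] at h
  linarith

lemma phi_range : Set.range phi = Set.Ioo (0 : ℝ) 1 := by
  ext t
  simp only [Set.mem_range, Set.mem_Ioo]
  constructor
  · rintro ⟨x, rfl⟩
    exact phi_mem x
  · rintro ⟨h0, h1⟩
    refine ⟨-(Real.log ((1 - t) / t)) / 2, ?_⟩
    have ht : t ≠ 0 := ne_of_gt h0
    have h1t : 0 < 1 - t := by linarith
    rw [phi]
    have he : -(2 * (-(Real.log ((1 - t) / t)) / 2)) = Real.log ((1 - t) / t) := by ring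
    rw [he, Real.exp_log (by positivity)]
    have e : 1 + (1 - t) / t = t⁻¹ := by field_simp; ring
    rw [e, inv_inv]

lemma phi'_eq (x : ℝ) :
    2 * Real.exp (-(2 * x)) / (1 + Real.exp (-(2 * x))) ^ 2
      = 1 / (2 * Real.cosh x ^ 2) := by
  have hu : (0 : ℝ) < Real.exp x := Real.exp_pos x
  have hv : (0 : ℝ) < Real.exp (-x) := Real.exp_pos (-x)
  have huv : Real.exp x * Real.exp (-x) = 1 := by
    rw [← Real.exp_add]; simp
  have hE : Real.exp (-(2 * x)) = Real.exp (-x) * Real.exp (-x) := by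
    rw [← Real.exp_add]; ring_nf
  have hkey : 1 + Real.exp (-x) * Real.exp (-x)
      = Real.exp (-x) * (Real.exp x + Real.exp (-x)) := by
    rw [mul_add, mul_comm (Real.exp (-x)) (Real.exp x), huv]
  rw [Real.cosh_eq, hE, hkey]
  have hs : (0 : ℝ) < Real.exp x + Real.exp (-x) := by positivity
  field_simp

/-- The pointwise identity behind the change of variables. -/
lemma pointwise (a : ℝ) (x : ℝ) :
    |2 * Real.exp (-(2 * x)) / (1 + Real.exp (-(2 * x))) ^ 2| •
        (((phi x : ℝ) : ℂ) ^ (Complex.I * a / 2)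
          * (1 - ((phi x : ℝ) : ℂ)) ^ (-(Complex.I * a / 2)))
      = Complex.exp (Complex.I * a * x) / (2 * (Real.cosh x : ℂ) ^ 2) := by
  obtain ⟨h0, h1⟩ := phi_mem x
  have hE : (0 : ℝ) < Real.exp (-(2 * x)) := Real.exp_pos _
  have hP : (0 : ℝ) < 1 + Real.exp (-(2 * x)) := one_add_exp_pos x
  -- compute the two cpow factors
  have hne1 : ((phi x : ℝ) : ℂ) ≠ 0 := Complex.ofReal_ne_zero.mpr (ne_of_gt h0)
  have h1t : (0 : ℝ) < 1 - phi x := by linarith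
  have hne2 : (1 - ((phi x : ℝ) : ℂ)) ≠ 0 := by
    rw [show (1 - ((phi x : ℝ) : ℂ)) = ((1 - phi x : ℝ) : ℂ) by push_cast; ring]
    exact Complex.ofReal_ne_zero.mpr (ne_of_gt h1t)
  have hlog1 : Complex.log ((phi x : ℝ) : ℂ) = ((Real.log (phi x) : ℝ) : ℂ) :=
    (Complex.ofReal_log h0.le).symm
  have hlog2 : Complex.log (1 - ((phi x : ℝ) : ℂ)) = ((Real.log (1 - phi x) : ℝ) : ℂ) := by
    rw [show (1 - ((phi x : ℝ) : ℂ)) = ((1 - phi x : ℝ) : ℂ) by push_cast; ring]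
    exact (Complex.ofReal_log h1t.le).symm
  -- the real log difference is 2x
  have hsub : 1 - phi x = Real.exp (-(2 * x)) / (1 + Real.exp (-(2 * x))) := by
    rw [phi]; field_simp; ring
  have hlogdiff : Real.log (phi x) - Real.log (1 - phi x) = 2 * x := by
    rw [hsub, phi, Real.log_inv, Real.log_div (ne_of_gt hE) (ne_of_gt hP),
      Real.log_exp]
    ring
  have hcpow : ((phi x : ℝ) : ℂ) ^ (Complex.I * a / 2)
      * (1 - ((phi x : ℝ) : ℂ)) ^ (-(Complex.I * a / 2))
      = Complex.exp (Complex.I * a * x) := by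
    rw [Complex.cpow_def_of_ne_zero hne1, Complex.cpow_def_of_ne_zero hne2,
      hlog1, hlog2, ← Complex.exp_add]
    congr 1
    have : ((Real.log (phi x) : ℝ) : ℂ) - ((Real.log (1 - phi x) : ℝ) : ℂ)
        = ((2 * x : ℝ) : ℂ) := by
      rw [← Complex.ofReal_sub, hlogdiff]
    have h2 : ((Real.log (phi x) : ℝ) : ℂ) * (Complex.I * a / 2)
        + ((Real.log (1 - phi x) : ℝ) : ℂ) * (-(Complex.I * a / 2))
        = (((Real.log (phi x) : ℝ) : ℂ) - ((Real.log (1 - phi x) : ℝ) : ℂ))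
          * (Complex.I * a / 2) := by ring
    rw [h2, this]
    push_cast
    ring
  rw [hcpow]
  have habs : |2 * Real.exp (-(2 * x)) / (1 + Real.exp (-(2 * x))) ^ 2|
      = 1 / (2 * Real.cosh x ^ 2) := by
    rw [abs_of_pos (by positivity), phi'_eq]
  rw [habs, Complex.real_smul]
  have hcosh : (0 : ℝ) < Real.cosh x := Real.cosh_pos x
  push_cast
  field_simp

/-- The integral equals a Beta integral. -/
lemma integral_eq_beta (a : ℝ) :
    ∫ z : ℝ, Complex.exp (Complex.I * a * z) / (2 * (Real.cosh z : ℂ) ^ 2)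
      = Complex.betaIntegral (1 + Complex.I * a / 2) (1 - Complex.I * a / 2) := by
  have hcv := integral_image_eq_integral_abs_deriv_smul (MeasurableSet.univ)
      (fun x _ => (hasDerivAt_phi x).hasDerivWithinAt)
      (phi_inj.injOn)
      (fun t : ℝ => ((t : ℂ) ^ (Complex.I * a / 2)
        * (1 - (t : ℂ)) ^ (-(Complex.I * a / 2))))
  rw [Set.image_univ, phi_range] at hcv
  have hfun : (fun z : ℝ => Complex.exp (Complex.I * a * z) / (2 * (Real.cosh z : ℂ) ^ 2))
      = fun x : ℝ => |2 * Real.exp (-(2 * x)) / (1 + Real.exp (-(2 * x))) ^ 2| •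
          (((phi x : ℝ) : ℂ) ^ (Complex.I * a / 2)
            * (1 - ((phi x : ℝ) : ℂ)) ^ (-(Complex.I * a / 2))) :=
    funext fun x => (pointwise a x).symm
  rw [hfun, ← MeasureTheory.setIntegral_univ, ← hcv]
  rw [Complex.betaIntegral, intervalIntegral.integral_of_le (zero_le_one),
    ← MeasureTheory.integral_Ioc_eq_integral_Ioo]
  congr 1
  funext t
  congr 1
  · congr 1; ring
  · congr 1; ring

lemma beta_val (a : ℝ) (ha : a ≠ 0) :
    Complex.betaIntegral (1 + Complex.I * a / 2) (1 - Complex.I * a / 2)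
      = ((Real.pi * a / (2 * Real.sinh (Real.pi * a / 2)) : ℝ) : ℂ) := by
  set w : ℂ := Complex.I * a / 2 with hw
  have hw_re : w.re = 0 := by simp [hw]
  have h1 : (0 : ℝ) < (1 + w).re := by simp [Complex.add_re, hw_re]
  have h2 : (0 : ℝ) < (1 - w).re := by simp [Complex.sub_re, hw_re]
  have hbeta := Complex.Gamma_mul_Gamma_eq_betaIntegral h1 h2
  have hsum : (1 + w) + (1 - w) = 2 := by ring
  rw [hsum] at hbeta
  have hG2 : Complex.Gamma 2 = 1 := by
    rw [show (2 : ℂ) = 1 + 1 by norm_num, Complex.Gamma_add_one 1 one_ne_zero,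
      Complex.Gamma_one, mul_one]
  rw [hG2, one_mul] at hbeta
  have hwne : w ≠ 0 := by
    rw [hw]
    exact div_ne_zero (mul_ne_zero Complex.I_ne_zero (Complex.ofReal_ne_zero.mpr ha))
      two_ne_zero
  have h1w : Complex.Gamma (1 + w) = w * Complex.Gamma w := by
    rw [add_comm]; exact Complex.Gamma_add_one w hwne
  have hrefl := Complex.Gamma_mul_Gamma_one_sub w
  have hsin : (Real.pi : ℂ) * w = ((Real.pi * a / 2 : ℝ) : ℂ) * Complex.I := by
    rw [hw]; push_cast; ring
  have hs : Real.sinh (Real.pi * a / 2) ≠ 0 := by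
    rw [ne_eq, Real.sinh_eq_zero]
    exact div_ne_zero (mul_ne_zero Real.pi_ne_zero ha) two_ne_zero
  calc Complex.betaIntegral (1 + w) (1 - w)
      = Complex.Gamma (1 + w) * Complex.Gamma (1 - w) := hbeta.symm
    _ = w * (Complex.Gamma w * Complex.Gamma (1 - w)) := by rw [h1w]; ring
    _ = w * ((Real.pi : ℂ) / Complex.sin ((Real.pi : ℂ) * w)) := by rw [hrefl]
    _ = ((Real.pi * a / (2 * Real.sinh (Real.pi * a / 2)) : ℝ) : ℂ) := by
        rw [hsin, Complex.sin_mul_I, ← Complex.ofReal_sinh]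
        rw [hw]
        have hkey : (Complex.I * (a : ℂ) / 2) *
            ((Real.pi : ℂ) / (((Real.sinh (Real.pi * a / 2) : ℝ) : ℂ) * Complex.I))
            = ((a : ℂ) * (Real.pi : ℂ)) / (2 * ((Real.sinh (Real.pi * a / 2) : ℝ) : ℂ)) := by
          rw [div_mul_div_comm,
            show Complex.I * (a : ℂ) * (Real.pi : ℂ)
              = Complex.I * ((a : ℂ) * (Real.pi : ℂ)) by ring,
            show (2 : ℂ) * (((Real.sinh (Real.pi * a / 2) : ℝ) : ℂ) * Complex.I)
              = Complex.I * (2 * ((Real.sinh (Real.pi * a / 2) : ℝ) : ℂ)) by ring]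
          exact mul_div_mul_left _ _ Complex.I_ne_zero
        rw [hkey]
        push_cast
        ring

end Stmt10Aux

/-- `∫ e^{iaz}/(2 cosh² z) dz = πa/(2 sinh(πa/2))` for `a ≠ 0`,
and equals `1` for `a = 0`. -/
theorem stmt10 (a : ℝ) :
    (a ≠ 0 →
      ∫ z : ℝ, Complex.exp (Complex.I * a * z) / (2 * (Real.cosh z : ℂ) ^ 2)
        = ((Real.pi * a / (2 * Real.sinh (Real.pi * a / 2)) : ℝ) : ℂ)) ∧
    (a = 0 →
      ∫ z : ℝ, Complex.exp (Complex.I * a * z) / (2 * (Real.cosh z : ℂ) ^ 2)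
        = 1) := by
  constructor
  · intro ha
    rw [Stmt10Aux.integral_eq_beta, Stmt10Aux.beta_val a ha]
  · intro ha
    subst ha
    rw [Stmt10Aux.integral_eq_beta]
    norm_num
    rw [Complex.betaIntegral_eval_one_right (by norm_num)]
    norm_num
end

section
/- For real a ≠ 0 and real Δ ≠ 0, the integral K(a, Δ) = ∫_{−∞}^{∞} e^{iaz}/(2 cosh z · cosh(z + Δ)) dz equals π(1 − e^{−iaΔ})/(2i sinh Δ sinh(πa/2)). -/
open Complex MeasureTheory
open Set

noncomputable def psi (x : ℝ) : ℝ := (Real.log (1 - x) - Real.log x) / 2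

lemma psi_hasDerivAt {x : ℝ} (hx : x ∈ Ioo (0:ℝ) 1) :
    HasDerivAt psi (-(1 / (2 * x * (1 - x)))) x := by
  obtain ⟨h0, h1⟩ := hx
  have h1' : 1 - x > 0 := by linarith
  have h : HasDerivAt (fun y : ℝ => Real.log (1 - y)) (-(1/(1-x))) x := by
    have := (Real.hasDerivAt_log h1'.ne').comp x ((hasDerivAt_id x).const_sub 1)
    exact this.congr_deriv (by ring)
  have h2 := (h.sub (Real.hasDerivAt_log h0.ne')).div_const 2
  refine h2.congr_deriv ?_
  have hx0 : x ≠ 0 := h0.ne'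
  have hx1 : 1 - x ≠ 0 := h1'.ne'
  field_simp
  ring

lemma psi_surj : Set.univ ⊆ psi '' Ioo (0:ℝ) 1 := by
  intro t _
  refine ⟨1 / (1 + Real.exp (2 * t)), ⟨by positivity, ?_⟩, ?_⟩
  · rw [div_lt_one (by positivity)]
    have := Real.exp_pos (2 * t); linarith
  · have he : (0:ℝ) < 1 + Real.exp (2 * t) := by positivity
    have h1 : 1 - 1 / (1 + Real.exp (2 * t)) = Real.exp (2 * t) / (1 + Real.exp (2 * t)) := by
      field_simp
      ring
    rw [psi, h1, Real.log_div (by positivity) (by positivity),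
      Real.log_div one_ne_zero (by positivity), Real.log_exp, Real.log_one]
    ring

lemma psi_inj : InjOn psi (Ioo (0:ℝ) 1) := by
  have : StrictAntiOn psi (Ioo (0:ℝ) 1) := by
    apply strictAntiOn_of_deriv_neg (convex_Ioo _ _)
    · intro x hx
      exact (psi_hasDerivAt hx).continuousAt.continuousWithinAt
    · intro x hx
      rw [interior_Ioo] at hx
      rw [(psi_hasDerivAt hx).deriv]
      obtain ⟨h0, h1⟩ := hx
      have h2 : (0:ℝ) < 2 * x * (1 - x) := by nlinarith
      have := one_div_pos.mpr h2
      linarith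
  exact this.injOn

lemma cosh_psi_sq {x : ℝ} (hx : x ∈ Ioo (0:ℝ) 1) :
    Real.cosh (psi x) ^ 2 = 1 / (4 * x * (1 - x)) := by
  obtain ⟨h0, h1⟩ := hx
  have h1' : (0:ℝ) < 1 - x := by linarith
  have hu2 : Real.exp (psi x) ^ 2 = (1 - x) / x := by
    rw [sq, ← Real.exp_add, psi,
      show (Real.log (1-x) - Real.log x)/2 + (Real.log (1-x) - Real.log x)/2
        = Real.log (1-x) - Real.log x by ring,
      Real.exp_sub, Real.exp_log h1', Real.exp_log h0]
  rw [Real.cosh_eq, Real.exp_neg]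
  set u := Real.exp (psi x) with hu
  have hu0 : u ≠ 0 := (Real.exp_pos _).ne'
  have key : u ^ 2 * x = 1 - x := by
    rw [hu2]; field_simp
  field_simp
  ring_nf
  nlinarith [key, sq_nonneg u]

lemma exp_I_psi {a x : ℝ} (hx : x ∈ Ioo (0:ℝ) 1) :
    Complex.exp (I * a * psi x)
      = (x:ℂ) ^ (-(I * a / 2)) * ((1 - x : ℝ):ℂ) ^ (I * a / 2) := by
  obtain ⟨h0, h1⟩ := hx
  have h1' : (0:ℝ) < 1 - x := by linarith
  rw [Complex.cpow_def_of_ne_zero (by exact_mod_cast h0.ne'),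
    Complex.cpow_def_of_ne_zero (by exact_mod_cast h1'.ne'),
    ← Complex.ofReal_log h0.le, ← Complex.ofReal_log h1'.le, ← Complex.exp_add]
  congr 1
  rw [psi]
  push_cast
  ring

lemma lemA (a : ℝ) (ha : a ≠ 0) :
    ∫ t : ℝ, Complex.exp (I * a * t) / (Real.cosh t : ℂ) ^ 2
      = (Real.pi : ℂ) * a / (Real.sinh (Real.pi * a / 2) : ℂ) := by
  have h1 : (∫ t : ℝ, Complex.exp (I * a * t) / (Real.cosh t : ℂ) ^ 2)
      = ∫ x in Ioo (0:ℝ) 1,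
          |(-(1 / (2 * x * (1 - x))))| •
            (Complex.exp (I * a * psi x) / (Real.cosh (psi x) : ℂ) ^ 2) := by
    rw [← setIntegral_univ, ← Set.eq_univ_of_univ_subset psi_surj]
    exact integral_image_eq_integral_abs_deriv_smul measurableSet_Ioo
      (fun x hx => (psi_hasDerivAt hx).hasDerivWithinAt) psi_inj _
  rw [h1]
  have h2 : ∫ x in Ioo (0:ℝ) 1,
        |(-(1 / (2 * x * (1 - x))))| •
          (Complex.exp (I * a * psi x) / (Real.cosh (psi x) : ℂ) ^ 2)
      = ∫ x in Ioo (0:ℝ) 1,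
          2 * ((x:ℂ) ^ ((1 - I * a / 2) - 1) * ((1 - x : ℝ):ℂ) ^ ((1 + I * a / 2) - 1)) := by
    refine setIntegral_congr_fun measurableSet_Ioo (fun x hx => ?_)
    obtain ⟨h0x, h1x⟩ := hx
    have h1' : (0:ℝ) < 1 - x := by linarith
    have habs : |(-(1 / (2 * x * (1 - x))))| = 1 / (2 * x * (1 - x)) := by
      rw [abs_neg, abs_of_pos]; positivity
    have hc : ((Real.cosh (psi x) : ℂ)) ^ 2 = ((1 / (4 * x * (1 - x)) : ℝ) : ℂ) := by
      rw [← Complex.ofReal_pow, cosh_psi_sq ⟨h0x, h1x⟩]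
    have h2x : ((2 * x * (1 - x) : ℝ)) ≠ 0 := by positivity
    rw [habs, exp_I_psi ⟨h0x, h1x⟩, real_smul, hc,
      show (1:ℂ) - I * a / 2 - 1 = -(I * a / 2) by ring,
      show (1:ℂ) + I * a / 2 - 1 = I * a / 2 by ring,
      show ((1 / (4 * x * (1 - x)) : ℝ) : ℂ) = (((4 * x * (1 - x) : ℝ)) : ℂ)⁻¹ by
        push_cast; ring,
      div_inv_eq_mul]
    have hconst : ((1 / (2 * x * (1 - x)) : ℝ) : ℂ) * (((4 * x * (1 - x) : ℝ)) : ℂ) = 2 := by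
      rw [← Complex.ofReal_mul,
        show (1 / (2 * x * (1 - x))) * (4 * x * (1 - x)) = (2:ℝ) by field_simp; ring]
      norm_num
    linear_combination ((x:ℂ) ^ (-(I * (a:ℂ) / 2)) * (((1 - x : ℝ)):ℂ) ^ (I * (a:ℂ) / 2)) * hconst
  rw [h2, ← integral_Ioc_eq_integral_Ioo,
    ← intervalIntegral.integral_of_le (by norm_num : (0:ℝ) ≤ 1),
    intervalIntegral.integral_const_mul]
  have hbeta : (∫ x in (0:ℝ)..1,
        (x:ℂ) ^ ((1 - I * a / 2) - 1) * ((1 - x : ℝ):ℂ) ^ ((1 + I * a / 2) - 1))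
      = Complex.betaIntegral (1 - I * a / 2) (1 + I * a / 2) := by
    rw [Complex.betaIntegral]
    congr 1
    ext x
    push_cast
    ring_nf
  rw [hbeta]
  have hu : 0 < Complex.re (1 - I * a / 2) := by simp [Complex.sub_re, Complex.div_re]
  have hv : 0 < Complex.re (1 + I * a / 2) := by simp [Complex.add_re, Complex.div_re]
  have hG := Complex.Gamma_mul_Gamma_eq_betaIntegral hu hv
  have hsum : (1 - I * a / 2) + (1 + I * a / 2) = 2 := by ring
  rw [hsum] at hG
  have hG2 : Complex.Gamma 2 = 1 := by
    rw [show (2:ℂ) = (1:ℕ) + 1 by norm_num, Complex.Gamma_nat_eq_factorial]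
    simp
  rw [hG2, one_mul] at hG
  rw [← hG]
  have hz : (I * a / 2 : ℂ) ≠ 0 := by
    simp [Complex.ext_iff, I_ne_zero, ha]
  have hGadd : Complex.Gamma (1 + I * a / 2) = (I * a / 2) * Complex.Gamma (I * a / 2) := by
    rw [add_comm, Complex.Gamma_add_one _ hz]
  have hrefl := Complex.Gamma_mul_Gamma_one_sub (I * a / 2)
  have hsin : Complex.sin (Real.pi * (I * a / 2)) = (Real.sinh (Real.pi * a / 2) : ℂ) * I := by
    rw [show ((Real.pi:ℂ)) * (I * a / 2) = ((Real.pi * a / 2 : ℝ) : ℂ) * I by push_cast; ring,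
      Complex.sin_mul_I, Complex.ofReal_sinh]
  rw [hsin] at hrefl
  have hsh : (Real.sinh (Real.pi * a / 2) : ℂ) ≠ 0 := by
    have : Real.sinh (Real.pi * a / 2) ≠ 0 := by
      rw [Real.sinh_ne_zero]
      positivity
    exact_mod_cast this
  rw [hGadd,
    show 2 * (Complex.Gamma (1 - I * a / 2) * (I * a / 2 * Complex.Gamma (I * a / 2)))
      = (I * a / 2 * 2) * (Complex.Gamma (I * a / 2) * Complex.Gamma (1 - I * a / 2)) by ring,
    hrefl]
  have hsh' : Complex.sinh ((Real.pi : ℂ) * a / 2) ≠ 0 := by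
    rw [show ((Real.pi : ℂ)) * a / 2 = ((Real.pi * a / 2 : ℝ) : ℂ) by push_cast; ring,
      ← Complex.ofReal_sinh]
    exact hsh
  field_simp
open Complex MeasureTheory Set

lemma hasDerivAt_tanh' (t : ℝ) : HasDerivAt Real.tanh (1 / Real.cosh t ^ 2) t := by
  have h := (Real.hasDerivAt_sinh t).div (Real.hasDerivAt_cosh t) (Real.cosh_pos t).ne'
  have heq : Real.tanh = fun x => Real.sinh x / Real.cosh x :=
    funext fun x => Real.tanh_eq_sinh_div_cosh x
  rw [heq]
  refine h.congr_deriv ?_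
  have := Real.cosh_sq_sub_sinh_sq t
  have hc0 := (Real.cosh_pos t).ne'
  field_simp
  nlinarith [this]

lemma ftc_tanh (u v : ℝ) :
    ∫ t in u..v, 1 / Real.cosh t ^ 2 = Real.tanh v - Real.tanh u :=
  intervalIntegral.integral_eq_sub_of_hasDerivAt (fun t _ => hasDerivAt_tanh' t)
    ((continuous_const.div (Real.continuous_cosh.pow 2)
      (fun t => pow_ne_zero 2 (Real.cosh_pos t).ne')).intervalIntegrable u v)

lemma integrable_sech_sq : Integrable (fun t : ℝ => 1 / Real.cosh t ^ 2) := by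
  have hexp : Integrable (fun x : ℝ => Real.exp (-(2 * |x|))) := by
    have h1 : IntegrableOn (fun x : ℝ => Real.exp (-(2 * |x|))) (Ioi 0) := by
      refine (exp_neg_integrableOn_Ioi 0 two_pos).congr_fun ?_ measurableSet_Ioi
      intro x hx
      simp only
      rw [abs_of_pos hx]
      ring_nf
    rw [← integrableOn_univ, ← @Iio_union_Ici _ _ (0:ℝ), integrableOn_union,
      integrableOn_Ici_iff_integrableOn_Ioi]
    refine ⟨?_, h1⟩
    rw [← (Measure.measurePreserving_neg (volume : Measure ℝ)).integrableOn_comp_preimage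
        (Homeomorph.neg ℝ).measurableEmbedding]
    simpa only [Function.comp_def, abs_neg, neg_preimage, neg_Iio, neg_zero] using h1
  refine (hexp.const_mul 4).mono' ?_ (Filter.Eventually.of_forall fun t => ?_)
  · exact (continuous_const.div (Real.continuous_cosh.pow 2)
      (fun t => pow_ne_zero 2 (Real.cosh_pos t).ne')).aestronglyMeasurable
  · have hc := Real.cosh_pos t
    have he : Real.exp |t| ≤ 2 * Real.cosh t := by
      rw [Real.cosh_eq]
      rcases abs_cases t with ⟨h, _⟩ | ⟨h, _⟩ <;> rw [h] <;>
        nlinarith [Real.exp_pos t, Real.exp_pos (-t)]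
    have hee : Real.exp (-(2 * |t|)) = (Real.exp |t|)⁻¹ ^ 2 := by
      rw [← Real.exp_neg, ← Real.exp_nat_mul]
      norm_num
    rw [Real.norm_eq_abs, abs_of_pos (by positivity : (0:ℝ) < 1 / Real.cosh t ^ 2), hee]
    have hep := Real.exp_pos |t|
    rw [div_le_iff₀ (by positivity), inv_pow]
    rw [show 4 * (Real.exp |t| ^ 2)⁻¹ * Real.cosh t ^ 2
        = 4 * Real.cosh t ^ 2 / Real.exp |t| ^ 2 by ring,
      le_div_iff₀ (by positivity)]
    nlinarith [he, hep, hc]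

lemma lemB (a Δ : ℝ) (ha : a ≠ 0) (hΔ : 0 < Δ) :
    ∫ z : ℝ, Complex.exp (I * a * z) * ((Real.tanh (z + Δ) : ℂ) - (Real.tanh z : ℂ))
      = (1 - Complex.exp (-(I * a * Δ))) / (I * a)
        * ((Real.pi : ℂ) * a / (Real.sinh (Real.pi * a / 2) : ℂ)) := by
  have hIa : (I * (a:ℂ)) ≠ 0 := mul_ne_zero I_ne_zero (Complex.ofReal_ne_zero.mpr ha)
  set G : ℝ → ℝ → ℂ := fun z t =>
    (Ioc z (z + Δ)).indicator (fun t => Complex.exp (I * a * z) / (Real.cosh t : ℂ) ^ 2) t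
    with hGdef
  have hcoshC : ∀ t : ℝ, ((Real.cosh t : ℂ)) ≠ 0 :=
    fun t => Complex.ofReal_ne_zero.mpr (Real.cosh_pos t).ne'
  -- sections in z
  have hsec : ∀ t : ℝ, (fun z => G z t)
      = (Ico (t - Δ) t).indicator (fun z => Complex.exp (I * a * z) / (Real.cosh t : ℂ) ^ 2) := by
    intro t
    funext z
    simp only [hGdef, Set.indicator_apply, Set.mem_Ioc, Set.mem_Ico]
    by_cases h : z < t ∧ t ≤ z + Δ
    · rw [if_pos h, if_pos ⟨by linarith [h.2], h.1⟩]
    · rw [if_neg h, if_neg (fun hc => h ⟨hc.2, by linarith [hc.1]⟩)]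
  -- integrability of the uncurried function
  have hunc : Function.uncurry G
      = ({p : ℝ × ℝ | p.1 < p.2} ∩ {p : ℝ × ℝ | p.2 ≤ p.1 + Δ}).indicator
          (fun p => Complex.exp (I * a * p.1) / (Real.cosh p.2 : ℂ) ^ 2) := by
    funext p
    simp only [Function.uncurry, hGdef, Set.indicator_apply, Set.mem_Ioc, Set.mem_inter_iff,
      Set.mem_setOf_eq]
  have hS : MeasurableSet ({p : ℝ × ℝ | p.1 < p.2} ∩ {p : ℝ × ℝ | p.2 ≤ p.1 + Δ}) :=
    (measurableSet_lt measurable_fst measurable_snd).inter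
      (measurableSet_le measurable_snd (measurable_fst.add_const Δ))
  have hgcont : Continuous (fun p : ℝ × ℝ => Complex.exp (I * a * p.1) / (Real.cosh p.2 : ℂ) ^ 2) := by
    refine Continuous.div ?_ ?_ (fun p => pow_ne_zero 2 (hcoshC p.2))
    · exact Complex.continuous_exp.comp
        (continuous_const.mul (Complex.continuous_ofReal.comp continuous_fst))
    · exact ((Complex.continuous_ofReal.comp (Real.continuous_cosh.comp continuous_snd)).pow 2)
  have hmeas : AEStronglyMeasurable (Function.uncurry G)
      ((volume : Measure ℝ).prod volume) := by
    rw [hunc]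
    exact hgcont.aestronglyMeasurable.indicator hS
  have hnorm : ∀ z t : ℝ, ‖Complex.exp (I * a * z) / (Real.cosh t : ℂ) ^ 2‖
      = 1 / Real.cosh t ^ 2 := by
    intro z t
    rw [norm_div, show I * (a:ℂ) * (z:ℂ) = ((a * z : ℝ) : ℂ) * I by push_cast; ring,
      Complex.norm_exp_ofReal_mul_I, norm_pow, Complex.norm_real, Real.norm_eq_abs,
      abs_of_pos (Real.cosh_pos t)]
  have hGint : Integrable (Function.uncurry G) ((volume : Measure ℝ).prod volume) := by
    refine (integrable_prod_iff' hmeas).mpr ⟨?_, ?_⟩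
    · refine Filter.Eventually.of_forall fun t => ?_
      show Integrable (fun z => G z t) volume
      rw [hsec t]
      refine (IntegrableOn.integrable_indicator ?_ measurableSet_Ico)
      refine IntegrableOn.mono_set ?_ Ico_subset_Icc_self
      exact (Complex.continuous_exp.comp
        (continuous_const.mul Complex.continuous_ofReal)).div_const _ |>.integrableOn_Icc
    · have heq : (fun t => ∫ z, ‖Function.uncurry G (z, t)‖)
          = fun t => Δ * (1 / Real.cosh t ^ 2) := by
        funext t
        have h1 : (fun z => ‖Function.uncurry G (z, t)‖)
            = (Ico (t - Δ) t).indicator (fun _ => 1 / Real.cosh t ^ 2) := by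
          have : (fun z => Function.uncurry G (z, t)) = fun z => G z t := rfl
          funext z
          rw [show Function.uncurry G (z, t) = G z t from rfl,
            show G z t = (fun z => G z t) z from rfl, hsec t]
          simp only [Set.indicator_apply]
          by_cases h : z ∈ Ico (t - Δ) t
          · rw [if_pos h, if_pos h, hnorm]
          · rw [if_neg h, if_neg h, norm_zero]
        rw [h1, MeasureTheory.integral_indicator measurableSet_Ico,
          MeasureTheory.setIntegral_const, Real.volume_real_Ico_of_le (by linarith : t - Δ ≤ t), smul_eq_mul]
        ring_nf
      rw [heq]
      exact integrable_sech_sq.const_mul Δ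
  -- LHS = iterated integral
  have hLHS : ∀ z : ℝ, Complex.exp (I * a * z) * ((Real.tanh (z + Δ) : ℂ) - (Real.tanh z : ℂ))
      = ∫ t, G z t := by
    intro z
    rw [hGdef]
    rw [MeasureTheory.integral_indicator measurableSet_Ioc,
      ← intervalIntegral.integral_of_le (by linarith : z ≤ z + Δ)]
    have : (fun t : ℝ => Complex.exp (I * a * z) / (Real.cosh t : ℂ) ^ 2)
        = fun t : ℝ => Complex.exp (I * a * z) * (((1 / Real.cosh t ^ 2 : ℝ)) : ℂ) := by
      funext t
      push_cast
      field_simp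
    rw [this, intervalIntegral.integral_const_mul, intervalIntegral.integral_ofReal, ftc_tanh]
    push_cast
    ring
  have hswap := MeasureTheory.integral_integral_swap hGint
  calc ∫ z : ℝ, Complex.exp (I * a * z) * ((Real.tanh (z + Δ) : ℂ) - (Real.tanh z : ℂ))
      = ∫ z : ℝ, ∫ t, G z t := by
        exact MeasureTheory.integral_congr_ae (Filter.Eventually.of_forall hLHS)
    _ = ∫ t : ℝ, ∫ z, G z t := hswap
    _ = ∫ t : ℝ, ((1 - Complex.exp (-(I * a * Δ))) / (I * a))
          * (Complex.exp (I * a * t) / (Real.cosh t : ℂ) ^ 2) := by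
        refine MeasureTheory.integral_congr_ae (Filter.Eventually.of_forall fun t => ?_)
        show (∫ z, G z t) = (1 - Complex.exp (-(I * a * Δ))) / (I * a)
          * (Complex.exp (I * a * t) / (Real.cosh t : ℂ) ^ 2)
        rw [show (∫ z, G z t) = ∫ z, (fun z => G z t) z from rfl, hsec t,
          MeasureTheory.integral_indicator measurableSet_Ico,
          MeasureTheory.integral_Ico_eq_integral_Ioo,
          ← MeasureTheory.integral_Ioc_eq_integral_Ioo,
          ← intervalIntegral.integral_of_le (by linarith : t - Δ ≤ t)]
        rw [show (fun z : ℝ => Complex.exp (I * a * z) / (Real.cosh t : ℂ) ^ 2)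
            = fun z : ℝ => Complex.exp ((I * a) * z) / ((Real.cosh t : ℂ) ^ 2) from rfl,
          intervalIntegral.integral_div, integral_exp_mul_complex hIa]
        have hsplit : Complex.exp (I * a * ((t - Δ : ℝ) : ℂ))
            = Complex.exp (I * a * t) * Complex.exp (-(I * a * Δ)) := by
          rw [← Complex.exp_add]
          congr 1
          push_cast
          ring
        rw [hsplit]
        field_simp
    _ = (1 - Complex.exp (-(I * a * Δ))) / (I * a)
        * ((Real.pi : ℂ) * a / (Real.sinh (Real.pi * a / 2) : ℂ)) := by
        rw [MeasureTheory.integral_const_mul, lemA a ha]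

lemma tanh_diff (z Δ : ℝ) :
    Real.tanh (z + Δ) - Real.tanh z = Real.sinh Δ / (Real.cosh z * Real.cosh (z + Δ)) := by
  rw [Real.tanh_eq_sinh_div_cosh, Real.tanh_eq_sinh_div_cosh,
    div_sub_div _ _ (Real.cosh_pos _).ne' (Real.cosh_pos _).ne']
  have key : Real.sinh (z + Δ) * Real.cosh z - Real.cosh (z + Δ) * Real.sinh z = Real.sinh Δ := by
    rw [← Real.sinh_sub, add_sub_cancel_left]
  rw [key, mul_comm]

lemma stmtPos (a Δ : ℝ) (ha : a ≠ 0) (hΔ : 0 < Δ) :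
    ∫ z : ℝ, Complex.exp (Complex.I * a * z)
        / (2 * (Real.cosh z : ℂ) * (Real.cosh (z + Δ) : ℂ))
      = (Real.pi : ℂ) * (1 - Complex.exp (-(Complex.I * a * Δ)))
        / (2 * Complex.I * (Real.sinh Δ : ℂ) * (Real.sinh (Real.pi * a / 2) : ℂ)) := by
  have hsΔC : Complex.sinh (Δ : ℂ) ≠ 0 := by
    rw [← Complex.ofReal_sinh]
    exact Complex.ofReal_ne_zero.mpr (Real.sinh_ne_zero.mpr hΔ.ne')
  have hshC : Complex.sinh ((Real.pi : ℂ) * a / 2) ≠ 0 := by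
    rw [show ((Real.pi : ℂ)) * a / 2 = ((Real.pi * a / 2 : ℝ) : ℂ) by push_cast; ring,
      ← Complex.ofReal_sinh]
    exact Complex.ofReal_ne_zero.mpr (Real.sinh_ne_zero.mpr (by positivity))
  have haC : ((a : ℂ)) ≠ 0 := Complex.ofReal_ne_zero.mpr ha
  have hpt : ∀ z : ℝ, Complex.exp (I * a * z)
        / (2 * (Real.cosh z : ℂ) * (Real.cosh (z + Δ) : ℂ))
      = (1 / (2 * (Real.sinh Δ : ℂ)))
        * (Complex.exp (I * a * z) * ((Real.tanh (z + Δ) : ℂ) - (Real.tanh z : ℂ))) := by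
    intro z
    have h1 : ((Real.cosh z : ℂ)) ≠ 0 := Complex.ofReal_ne_zero.mpr (Real.cosh_pos z).ne'
    have h2 : ((Real.cosh (z + Δ) : ℂ)) ≠ 0 :=
      Complex.ofReal_ne_zero.mpr (Real.cosh_pos (z + Δ)).ne'
    rw [show ((Real.tanh (z + Δ) : ℂ)) - (Real.tanh z : ℂ)
        = ((Real.tanh (z + Δ) - Real.tanh z : ℝ) : ℂ) by push_cast; ring, tanh_diff]
    push_cast
    field_simp [hsΔC]
  rw [MeasureTheory.integral_congr_ae (Filter.Eventually.of_forall hpt),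
    MeasureTheory.integral_const_mul, lemB a Δ ha hΔ]
  field_simp [hsΔC, hshC]

/-- `K(a,Δ) = π(1 − e^{−iaΔ})/(2i sinh Δ sinh(πa/2))` for real
`a ≠ 0`, `Δ ≠ 0`. -/
theorem stmt11 (a Δ : ℝ) (ha : a ≠ 0) (hΔ : Δ ≠ 0) :
    ∫ z : ℝ, Complex.exp (Complex.I * a * z)
        / (2 * (Real.cosh z : ℂ) * (Real.cosh (z + Δ) : ℂ))
      = (Real.pi : ℂ) * (1 - Complex.exp (-(Complex.I * a * Δ)))
        / (2 * Complex.I * (Real.sinh Δ : ℂ) * (Real.sinh (Real.pi * a / 2) : ℂ)) := by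
  rcases hΔ.lt_or_gt with hneg | hpos
  · have hpos' := stmtPos a (-Δ) ha (by linarith)
    have hshift := MeasureTheory.integral_add_right_eq_self
      (μ := (volume : Measure ℝ))
      (fun z : ℝ => Complex.exp (Complex.I * a * z)
        / (2 * (Real.cosh z : ℂ) * (Real.cosh (z + Δ) : ℂ))) (-Δ)
    rw [← hshift]
    have hpt : ∀ x : ℝ, Complex.exp (Complex.I * a * ((x + -Δ : ℝ) : ℂ))
          / (2 * (Real.cosh (x + -Δ) : ℂ) * (Real.cosh ((x + -Δ) + Δ) : ℂ))
        = Complex.exp (-(Complex.I * a * Δ))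
          * (Complex.exp (Complex.I * a * x)
            / (2 * (Real.cosh x : ℂ) * (Real.cosh (x + -Δ) : ℂ))) := by
      intro x
      rw [show x + -Δ + Δ = x by ring,
        show Complex.I * a * ((x + -Δ : ℝ) : ℂ)
          = Complex.I * a * x + -(Complex.I * a * Δ) by push_cast; ring,
        Complex.exp_add]
      ring
    rw [MeasureTheory.integral_congr_ae (Filter.Eventually.of_forall hpt),
      MeasureTheory.integral_const_mul, hpos', Real.sinh_neg]
    have hshC : Complex.sinh ((Real.pi : ℂ) * a / 2) ≠ 0 := by
      rw [show ((Real.pi : ℂ)) * a / 2 = ((Real.pi * a / 2 : ℝ) : ℂ) by push_cast; ring,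
        ← Complex.ofReal_sinh]
      exact Complex.ofReal_ne_zero.mpr (Real.sinh_ne_zero.mpr (by positivity))
    have hsΔC : Complex.sinh (Δ : ℂ) ≠ 0 := by
      rw [← Complex.ofReal_sinh]
      exact Complex.ofReal_ne_zero.mpr (Real.sinh_ne_zero.mpr hΔ)
    have hEE : Complex.exp (-(Complex.I * a * Δ)) * Complex.exp (Complex.I * a * Δ) = 1 := by
      rw [← Complex.exp_add]; simp
    rw [show ((-Δ : ℝ) : ℂ) = -(Δ : ℂ) by push_cast; ring]
    push_cast
    field_simp [hsΔC, hshC]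
    linear_combination ((Complex.sinh ((a:ℂ) * (Real.pi:ℂ) / 2))⁻¹) * hEE
  · exact stmtPos a Δ ha hpos
end

section
/- Let L and A be the tridiagonal matrices of the Toda-chain Lax pair: L = Σ_s b_s E_{ss} + Σ_s a_s(E_{s,s+1} + E_{s+1,s}) and A = Σ_s a_s(E_{s,s+1} − E_{s+1,s}). If the functions a_s(t), b_s(t) satisfy the open Toda chain equations da_s/dt = a_s(b_{s+1} − b_s) and db_s/dt = 2(a_s² − a_{s−1}²) (with a₀ = a_N = 0), then dL/dt = [A, L]. -/
open Matrix

/-- entrywise values of the extended tridiagonal matrix `L`, indexed by `ℕ`. -/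
def Ltil (a b : ℕ → ℝ → ℂ) (p q : ℕ) (t : ℝ) : ℂ :=
  if p = q then b (p + 1) t
  else if p + 1 = q then a (p + 1) t
  else if q + 1 = p then a (q + 1) t
  else 0

lemma Ltil_diag (a b : ℕ → ℝ → ℂ) {p q : ℕ} (h : p = q) (t : ℝ) :
    Ltil a b p q t = b (p + 1) t := by rw [Ltil, if_pos h]

lemma Ltil_up (a b : ℕ → ℝ → ℂ) {p q : ℕ} (h : p + 1 = q) (t : ℝ) :
    Ltil a b p q t = a (p + 1) t := by rw [Ltil, if_neg (by omega), if_pos h]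

lemma Ltil_down (a b : ℕ → ℝ → ℂ) {p q : ℕ} (h : q + 1 = p) (t : ℝ) :
    Ltil a b p q t = a (q + 1) t := by
  rw [Ltil, if_neg (by omega), if_neg (by omega), if_pos h]

lemma Ltil_far (a b : ℕ → ℝ → ℂ) {p q : ℕ} (h1 : ¬ p = q) (h2 : ¬ p + 1 = q)
    (h3 : ¬ q + 1 = p) (t : ℝ) : Ltil a b p q t = 0 := by
  rw [Ltil, if_neg h1, if_neg h2, if_neg h3]

lemma sum_ind {N : ℕ} (c : ℕ) (x : ℂ) (h : c < N ∨ x = 0) :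
    ∑ m : Fin N, (if c = (m : ℕ) then x else 0) = x := by
  rcases h with h | h
  · rw [Finset.sum_eq_single (⟨c, h⟩ : Fin N)]
    · simp
    · intro m _ hm
      rw [if_neg]
      intro hc
      exact hm (Fin.ext hc.symm)
    · simp
  · simp [h]

/-- if `a_s, b_s` solve the open Toda chain equations, then the
tridiagonal Lax matrices `L, A` satisfy the Lax equation `dL/dt = [A, L]`
(entrywise). Indices of `a, b` are 1-based, with the convention `a₀ = a_N = 0`. -/
theorem stmt15 (N : ℕ) (hN : 2 ≤ N)
    (a b : ℕ → ℝ → ℂ)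
    (ha0 : ∀ t, a 0 t = 0) (haN : ∀ t, a N t = 0)
    (L A : ℝ → Matrix (Fin N) (Fin N) ℂ)
    (hLdef : ∀ t (j k : Fin N), L t j k =
      if (j : ℕ) = (k : ℕ) then b ((j : ℕ) + 1) t
      else if (j : ℕ) + 1 = (k : ℕ) then a ((j : ℕ) + 1) t
      else if (k : ℕ) + 1 = (j : ℕ) then a ((k : ℕ) + 1) t
      else 0)
    (hAdef : ∀ t (j k : Fin N), A t j k =
      if (j : ℕ) + 1 = (k : ℕ) then a ((j : ℕ) + 1) t
      else if (k : ℕ) + 1 = (j : ℕ) then -(a ((k : ℕ) + 1) t)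
      else 0)
    (hToda_a : ∀ s : ℕ, 1 ≤ s → s ≤ N - 1 → ∀ t : ℝ,
      HasDerivAt (a s) (a s t * (b (s + 1) t - b s t)) t)
    (hToda_b : ∀ s : ℕ, 1 ≤ s → s ≤ N → ∀ t : ℝ,
      HasDerivAt (b s) (2 * ((a s t) ^ 2 - (a (s - 1) t) ^ 2)) t) :
    ∀ (t : ℝ) (j k : Fin N),
      HasDerivAt (fun τ => L τ j k) ((A t * L t - L t * A t) j k) t := by
  intro t j k
  have hJN : (j : ℕ) < N := j.isLt
  have hKN : (k : ℕ) < N := k.isLt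
  have hLt : ∀ (m : Fin N) (τ : ℝ), L τ j m = Ltil a b (j : ℕ) (m : ℕ) τ := by
    intro m τ; rw [hLdef, Ltil]
  have hLt' : ∀ (m : Fin N) (τ : ℝ), L τ m k = Ltil a b (m : ℕ) (k : ℕ) τ := by
    intro m τ; rw [hLdef, Ltil]
  -- compute the commutator entry
  have hR : (A t * L t - L t * A t) j k =
      a ((j:ℕ)+1) t * Ltil a b ((j:ℕ)+1) (k:ℕ) t
      - a (j:ℕ) t * Ltil a b ((j:ℕ)-1) (k:ℕ) t
      - a (k:ℕ) t * Ltil a b (j:ℕ) ((k:ℕ)-1) t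
      + a ((k:ℕ)+1) t * Ltil a b (j:ℕ) ((k:ℕ)+1) t := by
    rw [Matrix.sub_apply, Matrix.mul_apply, Matrix.mul_apply]
    have h1 : ∀ m : Fin N, A t j m * L t m k =
        (if (j:ℕ)+1 = (m:ℕ) then a ((j:ℕ)+1) t * Ltil a b ((j:ℕ)+1) (k:ℕ) t else 0)
        + (if (j:ℕ)-1 = (m:ℕ) then -(a (j:ℕ) t * Ltil a b ((j:ℕ)-1) (k:ℕ) t) else 0) := by
      intro m
      rw [hAdef, hLt' m t]
      by_cases hm1 : (j:ℕ)+1 = (m:ℕ)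
      · rw [if_pos hm1, if_pos hm1, if_neg (by omega), hm1]
        ring
      · rw [if_neg hm1, if_neg hm1]
        by_cases hm2 : (m:ℕ)+1 = (j:ℕ)
        · rw [if_pos hm2, if_pos (by omega : (j:ℕ)-1 = (m:ℕ)),
            (by omega : (m:ℕ) = (j:ℕ)-1), (by omega : (j:ℕ)-1+1 = (j:ℕ))]
          ring
        · rw [if_neg hm2]
          by_cases hm3 : (j:ℕ)-1 = (m:ℕ)
          · rw [if_pos hm3]
            have hj0 : (j:ℕ) = 0 := by omega
            rw [hj0, ha0]
            ring
          · rw [if_neg hm3]; ring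
    have h2 : ∀ m : Fin N, L t j m * A t m k =
        (if (k:ℕ)-1 = (m:ℕ) then Ltil a b (j:ℕ) ((k:ℕ)-1) t * a (k:ℕ) t else 0)
        + (if (k:ℕ)+1 = (m:ℕ) then Ltil a b (j:ℕ) ((k:ℕ)+1) t * -(a ((k:ℕ)+1) t) else 0) := by
      intro m
      rw [hAdef, hLt m t]
      by_cases hm1 : (m:ℕ)+1 = (k:ℕ)
      · rw [if_pos hm1, if_pos (by omega : (k:ℕ)-1 = (m:ℕ)), if_neg (by omega),
          (by omega : (m:ℕ) = (k:ℕ)-1), (by omega : (k:ℕ)-1+1 = (k:ℕ))]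
        ring
      · rw [if_neg hm1]
        by_cases hm2 : (k:ℕ)+1 = (m:ℕ)
        · rw [if_neg (by omega : ¬((k:ℕ)-1 = (m:ℕ))), if_pos hm2, if_pos hm2, hm2]
          ring
        · rw [if_neg (by omega), if_neg hm2]
          by_cases hm3 : (k:ℕ)-1 = (m:ℕ)
          · rw [if_pos hm3]
            have hk0 : (k:ℕ) = 0 := by omega
            rw [hk0, ha0]
            ring
          · rw [if_neg hm3]; ring
    rw [Finset.sum_congr rfl (fun m _ => h1 m), Finset.sum_congr rfl (fun m _ => h2 m),
      Finset.sum_add_distrib, Finset.sum_add_distrib,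
      sum_ind _ _ (by
        rcases Nat.lt_or_ge ((j:ℕ)+1) N with h | h
        · exact Or.inl h
        · right; rw [(by omega : (j:ℕ)+1 = N), haN]; ring),
      sum_ind _ _ (Or.inl (by omega)),
      sum_ind _ _ (Or.inl (by omega)),
      sum_ind _ _ (by
        rcases Nat.lt_or_ge ((k:ℕ)+1) N with h | h
        · exact Or.inl h
        · right; rw [(by omega : (k:ℕ)+1 = N), haN]; ring)]
    ring
  rw [hR]
  have hL : (fun τ => L τ j k) = (fun τ =>
      if (j : ℕ) = (k : ℕ) then b ((j : ℕ) + 1) τ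
      else if (j : ℕ) + 1 = (k : ℕ) then a ((j : ℕ) + 1) τ
      else if (k : ℕ) + 1 = (j : ℕ) then a ((k : ℕ) + 1) τ
      else 0) := funext (fun τ => hLdef τ j k)
  rw [hL]
  by_cases h1 : (j:ℕ) = (k:ℕ)
  · simp only [if_pos h1]
    have hd := hToda_b ((j:ℕ)+1) (by omega) (by omega) t
    rw [(by omega : (j:ℕ)+1-1 = (j:ℕ))] at hd
    convert hd using 1
    rw [← h1, Ltil_down a b rfl t, Ltil_up a b rfl t]
    by_cases hj0 : (j:ℕ) = 0
    · rw [hj0, ha0]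
      ring
    · rw [Ltil_up a b (by omega : (j:ℕ)-1+1 = (j:ℕ)) t,
        Ltil_down a b (by omega : (j:ℕ)-1+1 = (j:ℕ)) t,
        (by omega : (j:ℕ)-1+1 = (j:ℕ))]
      ring
  · by_cases h2 : (j:ℕ)+1 = (k:ℕ)
    · simp only [if_neg h1, if_pos h2]
      have hd := hToda_a ((j:ℕ)+1) (by omega) (by omega) t
      convert hd using 1
      rw [← h2, Ltil_diag a b rfl t, (by omega : (j:ℕ)+1-1 = (j:ℕ)),
        Ltil_diag a b rfl t,
        show Ltil a b (j:ℕ) ((j:ℕ)+1+1) t = 0 from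
          Ltil_far a b (by omega) (by omega) (by omega) t]
      by_cases hj0 : (j:ℕ) = 0
      · rw [hj0, ha0]
        ring
      · rw [show Ltil a b ((j:ℕ)-1) ((j:ℕ)+1) t = 0 from
          Ltil_far a b (by omega) (by omega) (by omega) t]
        ring
    · by_cases h3 : (k:ℕ)+1 = (j:ℕ)
      · simp only [if_neg h1, if_neg h2, if_pos h3]
        have hd := hToda_a ((k:ℕ)+1) (by omega) (by omega) t
        convert hd using 1
        rw [← h3, (by omega : (k:ℕ)+1-1 = (k:ℕ)), Ltil_diag a b rfl t,
          Ltil_diag a b rfl t,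
          show Ltil a b ((k:ℕ)+1+1) (k:ℕ) t = 0 from
            Ltil_far a b (by omega) (by omega) (by omega) t]
        by_cases hk0 : (k:ℕ) = 0
        · rw [hk0, ha0]
          ring
        · rw [show Ltil a b ((k:ℕ)+1) ((k:ℕ)-1) t = 0 from
            Ltil_far a b (by omega) (by omega) (by omega) t]
          ring
      · simp only [if_neg h1, if_neg h2, if_neg h3]
        have hE : a ((j:ℕ)+1) t * Ltil a b ((j:ℕ)+1) (k:ℕ) t
            - a (j:ℕ) t * Ltil a b ((j:ℕ)-1) (k:ℕ) t
            - a (k:ℕ) t * Ltil a b (j:ℕ) ((k:ℕ)-1) t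
            + a ((k:ℕ)+1) t * Ltil a b (j:ℕ) ((k:ℕ)+1) t = 0 := by
          rcases (by omega : (j:ℕ)+2 ≤ (k:ℕ) ∨ (k:ℕ)+2 ≤ (j:ℕ)) with h | h
          · by_cases he : (j:ℕ)+2 = (k:ℕ)
            · rw [Ltil_up a b (by omega : (j:ℕ)+1+1 = (k:ℕ)) t,
                Ltil_far a b (by omega) (by omega) (by omega) t,
                Ltil_up a b (by omega : (j:ℕ)+1 = (k:ℕ)-1) t,
                Ltil_far a b (by omega) (by omega) (by omega) t,
                (by omega : (k:ℕ) = (j:ℕ)+1+1)]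
              ring
            · rw [Ltil_far a b (by omega) (by omega) (by omega) t,
                Ltil_far a b (by omega) (by omega) (by omega) t,
                Ltil_far a b (by omega) (by omega) (by omega) t,
                Ltil_far a b (by omega) (by omega) (by omega) t]
              ring
          · by_cases he : (k:ℕ)+2 = (j:ℕ)
            · rw [Ltil_far a b (by omega) (by omega) (by omega) t,
                Ltil_down a b (by omega : (k:ℕ)+1 = (j:ℕ)-1) t,
                Ltil_far a b (by omega) (by omega) (by omega) t,
                Ltil_down a b (by omega : (k:ℕ)+1+1 = (j:ℕ)) t,
                (by omega : (j:ℕ) = (k:ℕ)+1+1)]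
              ring
            · rw [Ltil_far a b (by omega) (by omega) (by omega) t,
                Ltil_far a b (by omega) (by omega) (by omega) t,
                Ltil_far a b (by omega) (by omega) (by omega) t,
                Ltil_far a b (by omega) (by omega) (by omega) t]
              ring
        rw [hE]
        exact hasDerivAt_const t 0
end

section
/- The argument of the inner product ⟨n(θ₂, γ₂), n(θ₁, γ₁)⟩ satisfies tan(σ) = −tan(γ₂ − γ₁)·cos(θ₂ + θ₁)/cos(θ₂ − θ₁), where σ = arg⟨n(θ₂, γ₂), n(θ₁, γ₁)⟩, provided cos(θ₂ − θ₁) ≠ 0 and the real part cos(γ₂ − γ₁)cos(θ₂ − θ₁) of the inner product is positive. -/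
open Complex

/-- with `σ` the principal argument of
`⟨n(θ₂,γ₂), n(θ₁,γ₁)⟩`, and assuming `cos(θ₂−θ₁) ≠ 0` and
`cos(γ₂−γ₁)cos(θ₂−θ₁) > 0`, one has
`tan σ = −tan(γ₂−γ₁)·cos(θ₂+θ₁)/cos(θ₂−θ₁)`. -/
theorem stmt18 (θ₁ θ₂ γ₁ γ₂ : ℝ)
    (hcos : Real.cos (θ₂ - θ₁) ≠ 0)
    (hre : 0 < Real.cos (γ₂ - γ₁) * Real.cos (θ₂ - θ₁)) :
    Real.tan (Complex.arg
        ((starRingEnd ℂ) ((Real.cos θ₂ : ℂ) * Complex.exp (Complex.I * γ₂))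
            * ((Real.cos θ₁ : ℂ) * Complex.exp (Complex.I * γ₁))
          + (starRingEnd ℂ) ((Real.sin θ₂ : ℂ) * Complex.exp (-(Complex.I * γ₂)))
            * ((Real.sin θ₁ : ℂ) * Complex.exp (-(Complex.I * γ₁)))))
      = -(Real.tan (γ₂ - γ₁) * Real.cos (θ₂ + θ₁) / Real.cos (θ₂ - θ₁)) := by
  have hz : ((starRingEnd ℂ) ((Real.cos θ₂ : ℂ) * Complex.exp (Complex.I * γ₂))
            * ((Real.cos θ₁ : ℂ) * Complex.exp (Complex.I * γ₁))
          + (starRingEnd ℂ) ((Real.sin θ₂ : ℂ) * Complex.exp (-(Complex.I * γ₂)))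
            * ((Real.sin θ₁ : ℂ) * Complex.exp (-(Complex.I * γ₁))))
      = ⟨Real.cos (γ₂ - γ₁) * Real.cos (θ₂ - θ₁), -(Real.sin (γ₂ - γ₁) * Real.cos (θ₂ + θ₁))⟩ := by
    apply Complex.ext <;>
      simp [Complex.exp_re, Complex.exp_im, Real.cos_sub, Real.sin_sub, Real.cos_add, Complex.cos_ofReal_re, Complex.sin_ofReal_re] <;> ring
  rw [hz, Complex.tan_arg]
  have hc : Real.cos (γ₂ - γ₁) ≠ 0 := by
    intro h; rw [h] at hre; simp at hre
  rw [Real.tan_eq_sin_div_cos]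
  field_simp
end

section
/- The tridiagonal matrix L₄ with a = i·α, b = i·β for real α, β with α² + β² > 0 (so all entries are purely imaginary) has four pairwise distinct purely imaginary eigenvalues ±i√(α² + β²) and ±3i√(α² + β²). -/
open Matrix Complex

set_option maxHeartbeats 1000000 in
private theorem my_det_fin_four {R : Type*} [CommRing R] (A : Matrix (Fin 4) (Fin 4) R) :
    A.det =
      A 0 0*A 1 1*A 2 2*A 3 3
      - A 0 0*A 1 1*A 2 3*A 3 2
      - A 0 0*A 1 2*A 2 1*A 3 3
      + A 0 0*A 1 2*A 2 3*A 3 1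
      + A 0 0*A 1 3*A 2 1*A 3 2
      - A 0 0*A 1 3*A 2 2*A 3 1
      - A 0 1*A 1 0*A 2 2*A 3 3
      + A 0 1*A 1 0*A 2 3*A 3 2
      + A 0 1*A 1 2*A 2 0*A 3 3
      - A 0 1*A 1 2*A 2 3*A 3 0
      - A 0 1*A 1 3*A 2 0*A 3 2
      + A 0 1*A 1 3*A 2 2*A 3 0
      + A 0 2*A 1 0*A 2 1*A 3 3
      - A 0 2*A 1 0*A 2 3*A 3 1
      - A 0 2*A 1 1*A 2 0*A 3 3
      + A 0 2*A 1 1*A 2 3*A 3 0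
      + A 0 2*A 1 3*A 2 0*A 3 1
      - A 0 2*A 1 3*A 2 1*A 3 0
      - A 0 3*A 1 0*A 2 1*A 3 2
      + A 0 3*A 1 0*A 2 2*A 3 1
      + A 0 3*A 1 1*A 2 0*A 3 2
      - A 0 3*A 1 1*A 2 2*A 3 0
      - A 0 3*A 1 2*A 2 0*A 3 1
      + A 0 3*A 1 2*A 2 1*A 3 0 := by
  simp only [Matrix.det_succ_row_zero, Matrix.det_fin_three, Fin.sum_univ_succ,
    Matrix.submatrix_apply, Fin.succ_zero_eq_one, Fin.succ_one_eq_two,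
    Finset.univ_unique, Finset.sum_singleton, Fin.default_eq_zero,
    Fin.zero_succAbove, Fin.succ_succAbove_zero, Fin.succ_succAbove_one,
    Fin.val_zero, Fin.val_succ, Finset.sum_empty, Fin.val_eq_zero]
  norm_num [Fin.succ_succAbove_succ,
    show (Fin.succ 2 : Fin 4) = 3 from rfl,
    show Fin.succAbove (1 : Fin 4) (2 : Fin 3) = 3 from by decide,
    show Fin.succAbove (2 : Fin 4) (2 : Fin 3) = 3 from by decide,
    show Fin.succAbove (3 : Fin 4) (2 : Fin 3) = 2 from by decide,
    show Fin.castSucc (2 : Fin 3) = (2 : Fin 4) from by decide]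
  ring

/-- the matrix `L₄` with `a = iα`, `b = iβ`, `α, β ∈ ℝ`,
`α² + β² > 0`, has four pairwise distinct purely imaginary eigenvalues
`±i√(α²+β²)` and `±3i√(α²+β²)`. -/
theorem stmt19 (α β : ℝ) (hαβ : α ^ 2 + β ^ 2 > 0)
    (a b : ℂ) (haa : a = Complex.I * α) (hbb : b = Complex.I * β)
    (L₄ : Matrix (Fin 4) (Fin 4) ℂ)
    (hL : L₄ = !![3 * b, Real.sqrt 3 * a, 0, 0;
                  Real.sqrt 3 * a, b, 2 * a, 0;
                  0, 2 * a, -b, Real.sqrt 3 * a;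
                  0, 0, Real.sqrt 3 * a, -(3 * b)]) :
    ∀ s : ℝ, s = Real.sqrt (α ^ 2 + β ^ 2) →
      ([Complex.I * s, -(Complex.I * s), 3 * Complex.I * s,
        -(3 * Complex.I * s)] : List ℂ).Pairwise (· ≠ ·) ∧
      (∀ z : ℂ,
        Matrix.det (z • (1 : Matrix (Fin 4) (Fin 4) ℂ) - L₄) = 0 ↔
          z = Complex.I * s ∨ z = -(Complex.I * s)
            ∨ z = 3 * Complex.I * s ∨ z = -(3 * Complex.I * s)) ∧
      (∀ z : ℂ,
        Matrix.det (z • (1 : Matrix (Fin 4) (Fin 4) ℂ) - L₄) = 0 → z.re = 0) := by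
  intro s hsdef
  have hspos : 0 < s := hsdef ▸ Real.sqrt_pos.mpr hαβ
  have hs2 : (s : ℂ) ^ 2 = (α : ℂ) ^ 2 + (β : ℂ) ^ 2 := by
    have : s ^ 2 = α ^ 2 + β ^ 2 := by
      rw [hsdef, Real.sq_sqrt hαβ.le]
    exact_mod_cast congrArg (Complex.ofReal ·) this
  set t : ℂ := ((Real.sqrt 3 : ℝ) : ℂ) with ht
  have ht2 : t ^ 2 = 3 := by
    rw [ht, ← Complex.ofReal_pow, Real.sq_sqrt (by norm_num : (3:ℝ) ≥ 0)]
    norm_num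
  have h1 : Complex.I ^ 2 = -1 := Complex.I_sq
  have key : ∀ z : ℂ,
      Matrix.det (z • (1 : Matrix (Fin 4) (Fin 4) ℂ) - L₄) =
        (z - Complex.I * s) * (z + Complex.I * s) *
        (z - 3 * Complex.I * s) * (z + 3 * Complex.I * s) := by
    intro z
    subst hL haa hbb
    rw [show (z • (1 : Matrix (Fin 4) (Fin 4) ℂ) -
        !![3 * (Complex.I * β), t * (Complex.I * α), 0, 0;
           t * (Complex.I * α), Complex.I * β, 2 * (Complex.I * α), 0;
           0, 2 * (Complex.I * α), -(Complex.I * β), t * (Complex.I * α);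
           0, 0, t * (Complex.I * α), -(3 * (Complex.I * β))]) =
        !![z - 3 * (Complex.I * β), -(t * (Complex.I * α)), 0, 0;
           -(t * (Complex.I * α)), z - Complex.I * β, -(2 * (Complex.I * α)), 0;
           0, -(2 * (Complex.I * α)), z + Complex.I * β, -(t * (Complex.I * α));
           0, 0, -(t * (Complex.I * α)), z + 3 * (Complex.I * β)] from by
      ext i j
      fin_cases i <;> fin_cases j <;>
        simp [Matrix.smul_apply, Matrix.one_apply, Matrix.vecHead, Matrix.vecTail]]
    rw [my_det_fin_four]
    norm_num [Matrix.cons_val_zero, Matrix.cons_val_one,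
      Matrix.head_cons, Matrix.head_fin_const,
      Matrix.cons_val_two, Matrix.cons_val_three, Matrix.tail_cons, Matrix.vecHead, Matrix.vecTail]
    ring_nf
    linear_combination
      ((-9)*(β:ℂ)^4 + (-36)*(α:ℂ)^2*(β:ℂ)^2 + (-10)*z^2*(β:ℂ)^2 + (-4)*z^2*(α:ℂ)^2
        + (10)*(s:ℂ)^2*z^2 + (9)*(s:ℂ)^4 + (6)*t^2*(α:ℂ)^2*(β:ℂ)^2
        + (-2)*t^2*z^2*(α:ℂ)^2 + (-1)*t^4*(α:ℂ)^4 + (9)*Complex.I^2*(β:ℂ)^4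
        + (36)*Complex.I^2*(α:ℂ)^2*(β:ℂ)^2 + (-9)*Complex.I^2*(s:ℂ)^4
        + (-6)*Complex.I^2*t^2*(α:ℂ)^2*(β:ℂ)^2 + (1)*Complex.I^2*t^4*(α:ℂ)^4) * h1
      + ((-6)*(α:ℂ)^2*(β:ℂ)^2 + (3)*(α:ℂ)^4 + (2)*z^2*(α:ℂ)^2 + (1)*t^2*(α:ℂ)^4) * ht2
      + ((-9)*(β:ℂ)^2 + (-9)*(α:ℂ)^2 + (-10)*z^2 + (-9)*(s:ℂ)^2) * hs2
  refine ⟨?_, ?_, ?_⟩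
  · have hne : ∀ c d : ℝ, c ≠ d → (c : ℂ) * Complex.I * s ≠ (d : ℂ) * Complex.I * s := by
      intro c d hcd h
      have h2 : (c : ℂ) * (Complex.I * s) = (d : ℂ) * (Complex.I * s) := by
        rw [← mul_assoc, ← mul_assoc]; exact h
      have h3 : (c : ℂ) = d := mul_right_cancel₀
        (mul_ne_zero Complex.I_ne_zero (by exact_mod_cast hspos.ne')) h2
      exact hcd (by exact_mod_cast h3)
    rw [List.pairwise_iff_getElem]
    intro i j hi hj hij
    simp only [List.length_cons, List.length_nil] at hi hj
    interval_cases i <;> interval_cases j <;>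
      simp only [List.getElem_cons_zero, List.getElem_cons_succ] <;>
      first
      | omega
      | (intro h; have h' := congrArg Complex.im h; simp at h'; linarith)
  · intro z
    rw [key z]
    simp only [mul_eq_zero, sub_eq_zero, add_eq_zero_iff_eq_neg]
    tauto
  · intro z hz
    rcases ((by
      rw [key z] at hz
      simp only [mul_eq_zero, sub_eq_zero, add_eq_zero_iff_eq_neg] at hz
      tauto : z = Complex.I * s ∨ z = -(Complex.I * s)
        ∨ z = 3 * Complex.I * s ∨ z = -(3 * Complex.I * s))) with
      h | h | h | h <;> subst h <;> simp
end
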